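/- The EvenOdd algorithm is a 0.5-approximation for optimal pair encoding: for every string s and every k, there is a polynomial-time computable partial merge sequence of length k with utility at least F_k(s)/2 ≥ OPT(s,k)/2, where F_k(s) is the total number of occurrences of the k most frequent two-symbol pairs in s. -/

import Mathlib

variable {α : Type*} [DecidableEq α]

/-- Full greedy left-to-right replacement of the pair `ab` by `c`. -/
def replace (a b c : α) : List α → List α
  | [] => []
  | [x] => [x]
  | x :: y :: rest =>
    if x = a ∧ y = b then c :: replace a b c rest
    else x :: replace a b c (y :: rest)

/-- Replacement of every occurrence of the symbol `c` by the pair `ab`. -/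
def expand (a b c : α) : List α → List α
  | [] => []
  | x :: rest => if x = c then a :: b :: expand a b c rest else x :: expand a b c rest

/-- `t` is obtained from `s` by one partial replacement rule (replacing some
non-overlapping occurrences of a pair `ab` by a symbol `c`, invertibly). -/
def PartialStep (s t : List α) : Prop := ∃ a b c : α, expand a b c t = s

/-- `t` is obtained from `s` by one full merge of a pair `ab` into a fresh symbol `c`. -/
def FullStep (s t : List α) : Prop := ∃ a b c : α, c ∉ s ∧ t = replace a b c s

/-- A greedy (BPE) step: a full merge minimizing the resulting length. -/
def GreedyStep (s t : List α) : Prop :=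
  FullStep s t ∧ ∀ u : List α, FullStep s u → t.length ≤ u.length

/-- `t` is obtained from `s` by a partial merge sequence of length `k`. -/
def PartialReach : ℕ → List α → List α → Prop
  | 0, s, t => t = s
  | k+1, s, t => ∃ u, PartialStep s u ∧ PartialReach k u t

/-- `t` is obtained from `s` by a full merge sequence of length `k`. -/
def FullReach : ℕ → List α → List α → Prop
  | 0, s, t => t = s
  | k+1, s, t => ∃ u, FullStep s u ∧ FullReach k u t

/-- `t` is obtained from `s` by a run of BPE with `k` greedy merge rounds. -/
def GreedyReach : ℕ → List α → List α → Prop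
  | 0, s, t => t = s
  | k+1, s, t => ∃ u, GreedyStep s u ∧ GreedyReach k u t

/-- Optimal utility of partial merge sequences of length `k` (the OPE optimum). -/
noncomputable def OPT (s : List α) (k : ℕ) : ℕ :=
  sSup {u : ℕ | ∃ t : List α, PartialReach k s t ∧ u = s.length - t.length}

/-- Optimal utility of full merge sequences of length `k` (the OMS optimum). -/
noncomputable def OPTm (s : List α) (k : ℕ) : ℕ :=
  sSup {u : ℕ | ∃ t : List α, FullReach k s t ∧ u = s.length - t.length}

/-- A pair packing: non-overlapping indices at which a common pair occurs in `s`
(0-based indices). -/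
def IsPairPacking (s : List α) (P : Finset ℕ) : Prop :=
  (∀ i ∈ P, i + 1 < s.length) ∧
  (∀ i ∈ P, ∀ j ∈ P, i ≠ j → 2 ≤ Nat.dist i j) ∧
  ∃ a b : α, ∀ i ∈ P, s[i]? = some a ∧ s[i+1]? = some b

/-- A `k`-packing: a disjoint union of `k` pair packings. -/
def IsKPacking (s : List α) (k : ℕ) (P : Fin k → Finset ℕ) : Prop :=
  (∀ i, IsPairPacking s (P i)) ∧ ∀ i j, i ≠ j → Disjoint (P i) (P j)

/-- `Pk s k`: maximum size of a `k`-packing of `s`. -/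
noncomputable def Pk (s : List α) (k : ℕ) : ℕ :=
  sSup {n : ℕ | ∃ P : Fin k → Finset ℕ, IsKPacking s k P ∧ n = ∑ i, (P i).card}

/-- Number of (possibly overlapping) occurrences of the pair `ab` in `s`. -/
def freq (s : List α) (a b : α) : ℕ :=
  ((Finset.range s.length).filter (fun i => s[i]? = some a ∧ s[i+1]? = some b)).card

/-- `Fk s k`: total number of occurrences of the `k` most frequent pairs in `s`. -/
noncomputable def Fk (s : List α) (k : ℕ) : ℕ :=
  sSup {n : ℕ | ∃ Q : Finset (α × α), Q.card ≤ k ∧ n = ∑ p ∈ Q, freq s p.1 p.2}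

set_option linter.unusedSectionVars false
set_option linter.unnecessarySeqFocus false
set_option linter.unreachableTactic false
set_option linter.unusedTactic false

-- pairs list
def prs : List α → List (α × α)
  | [] => []
  | [_] => []
  | x :: y :: r => (x, y) :: prs (y :: r)

@[simp] lemma prs_nil : prs ([] : List α) = [] := rfl
@[simp] lemma prs_single (x : α) : prs [x] = [] := rfl
@[simp] lemma prs_cons₂ (x y : α) (r : List α) :
    prs (x :: y :: r) = (x, y) :: prs (y :: r) := rfl

lemma length_prs (s : List α) : (prs s).length = s.length - 1 := by
  induction s using prs.induct with
  | case1 => simp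
  | case2 => simp
  | case3 x y r ih => simp [ih]

lemma freq_cons (x : α) (t : List α) (a b : α) :
    freq (x :: t) a b = (if x = a ∧ t.head? = some b then 1 else 0) + freq t a b := by
  unfold freq
  rw [Finset.card_filter, List.length_cons, Finset.sum_range_succ']
  have h0 : (if (x::t)[0]? = some a ∧ (x::t)[0+1]? = some b then 1 else 0)
      = (if x = a ∧ t.head? = some b then 1 else 0) := by
    simp [List.head?_eq_getElem?]
  have hs : (∑ k ∈ Finset.range t.length,
      if (x::t)[k+1]? = some a ∧ (x::t)[k+1+1]? = some b then 1 else 0)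
      = ((Finset.range t.length).filter (fun i => t[i]? = some a ∧ t[i+1]? = some b)).card := by
    rw [Finset.card_filter]
    exact Finset.sum_congr rfl (by intro k _; simp)
  rw [h0, hs, add_comm]

lemma freq_eq_count (s : List α) (a b : α) :
    freq s a b = (prs s).count (a, b) := by
  induction s with
  | nil => simp [freq]
  | cons x t ih =>
    rw [freq_cons, ih]
    cases t with
    | nil => simp
    | cons y r =>
      simp only [prs_cons₂, List.count_cons, List.head?]
      have : ((x, y) == (a, b)) = decide (x = a ∧ y = b) := by
        by_cases h1 : x = a <;> by_cases h2 : y = b <;> simp [h1, h2]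
      rw [this]
      by_cases h : x = a ∧ y = b <;> simp [h] <;> omega
set_option linter.unnecessarySeqFocus false

lemma sum_count_eq_countP (l : List (α × α)) (Q : Finset (α × α)) :
    (∑ p ∈ Q, l.count p) = l.countP (fun z => decide (z ∈ Q)) := by
  induction l with
  | nil => simp
  | cons z l ih =>
    simp only [List.count_cons, List.countP_cons, Finset.sum_add_distrib, ih]
    congr 1
    have : (∑ p ∈ Q, if (z == p) = true then 1 else 0)
        = ∑ p ∈ Q, if p = z then 1 else 0 := by
      apply Finset.sum_congr rfl; intro p _
      by_cases h : p = z
      · simp [h]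
      · simp [h]; exact fun hz => h hz.symm
    rw [this, Finset.sum_ite_eq' Q z (fun _ => 1)]
    by_cases h : z ∈ Q <;> simp [h]

lemma sum_freq_eq_countP (s : List α) (Q : Finset (α × α)) :
    (∑ p ∈ Q, freq s p.1 p.2) = (prs s).countP (fun z => decide (z ∈ Q)) := by
  rw [← sum_count_eq_countP]
  exact Finset.sum_congr rfl (fun p _ => freq_eq_count s p.1 p.2)

lemma le_Fk (s : List α) (k : ℕ) (Q : Finset (α × α)) (hQ : Q.card ≤ k) :
    (∑ p ∈ Q, freq s p.1 p.2) ≤ Fk s k := by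
  apply le_csSup
  · refine ⟨(prs s).length, ?_⟩
    rintro n ⟨Q', -, rfl⟩
    rw [sum_freq_eq_countP]
    exact List.countP_le_length
  · exact ⟨Q, hQ, rfl⟩

lemma Fk_attained (s : List α) (k : ℕ) :
    ∃ Q : Finset (α × α), Q.card ≤ k ∧ Fk s k = ∑ p ∈ Q, freq s p.1 p.2 := by
  have h : Fk s k ∈ {n : ℕ | ∃ Q : Finset (α × α), Q.card ≤ k ∧ n = ∑ p ∈ Q, freq s p.1 p.2} := by
    apply Nat.sSup_mem
    · exact ⟨0, ∅, by simp⟩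
    · refine ⟨(prs s).length, ?_⟩
      rintro n ⟨Q', -, rfl⟩
      rw [sum_freq_eq_countP]
      exact List.countP_le_length
  exact h

-- expand lemmas
lemma expand_cons (a b c x : α) (l : List α) :
    expand a b c (x :: l) = if x = c then a :: b :: expand a b c l else x :: expand a b c l := rfl

lemma expand_append (a b c : α) (l₁ l₂ : List α) :
    expand a b c (l₁ ++ l₂) = expand a b c l₁ ++ expand a b c l₂ := by
  induction l₁ with
  | nil => simp [expand]
  | cons x l ih =>
    simp only [List.cons_append, expand_cons, ih]
    split <;> simp

lemma expand_of_not_mem {c : α} (a b : α) {l : List α} (h : c ∉ l) :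
    expand a b c l = l := by
  induction l with
  | nil => rfl
  | cons x l ih =>
    have hx : x ≠ c := by rintro rfl; exact h (.head _)
    rw [expand_cons, if_neg hx, ih (fun hc => h (.tail _ hc))]

lemma length_expand (a b c : α) (l : List α) :
    (expand a b c l).length = l.length + l.count c := by
  induction l with
  | nil => simp [expand]
  | cons x l ih =>
    rw [expand_cons, List.count_cons]
    split
    · next h => simp [ih, h]; omega
    · next h => have : (x == c) = false := by simp [h]
                simp [ih, this]; omega
-- Key counting lemma for one partial step
lemma step_count (a b c : α) (Q' Q : Finset (α × α)) (hab : (a, b) ∈ Q)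
    (hφ : ∀ p ∈ Q', ((if p.1 = c then b else p.1), (if p.2 = c then a else p.2)) ∈ Q) :
    ∀ u : List α, u.count c + (prs u).countP (fun z => decide (z ∈ Q'))
      ≤ (prs (expand a b c u)).countP (fun z => decide (z ∈ Q)) := by
  intro u
  induction u with
  | nil => simp [expand]
  | cons x tl ih =>
    cases tl with
    | nil =>
      by_cases hx : x = c
      · simp [expand_cons, hx, List.count_cons, hab]
      · have : (x == c) = false := by simp [hx]
        simp [expand_cons, hx, List.count_cons, this]
    | cons y r =>
      have hE : expand a b c (y :: r)
          = (if y = c then a else y) ::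
            (if y = c then b :: expand a b c r else expand a b c r) := by
        rw [expand_cons]; split <;> simp
      set gy := if y = c then a else y with hgy
      set rest := if y = c then b :: expand a b c r else expand a b c r with hrest
      have hcount : (x :: y :: r).count c
          = (y :: r).count c + (if x = c then 1 else 0) := by
        rw [List.count_cons]
        by_cases hx : x = c <;> simp [hx]
      have hprsu : (prs (x :: y :: r)).countP (fun z => decide (z ∈ Q'))
          = (prs (y :: r)).countP (fun z => decide (z ∈ Q'))
            + (if (x, y) ∈ Q' then 1 else 0) := by
        rw [prs_cons₂, List.countP_cons]
        by_cases h : (x, y) ∈ Q' <;> simp [h]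
      by_cases hx : x = c
      · -- x = c : expand u = a :: b :: gy :: rest
        have hEu : expand a b c (x :: y :: r) = a :: b :: gy :: rest := by
          rw [expand_cons, if_pos hx, hE]
        have hgoal : (prs (expand a b c (x :: y :: r))).countP (fun z => decide (z ∈ Q))
            = (prs (expand a b c (y :: r))).countP (fun z => decide (z ∈ Q))
              + ((if (a, b) ∈ Q then 1 else 0) + (if (b, gy) ∈ Q then 1 else 0)) := by
          rw [hEu, hE, prs_cons₂, prs_cons₂, List.countP_cons, List.countP_cons]
          by_cases h1 : (a, b) ∈ Q <;> by_cases h2 : (b, gy) ∈ Q <;> simp [h1, h2] <;> omega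
        rw [hcount, hprsu, hgoal]
        have hbgy : (x, y) ∈ Q' → (b, gy) ∈ Q := by
          intro h
          have := hφ (x, y) h
          simpa [hx, hgy] using this
        by_cases h2 : (x, y) ∈ Q'
        · simp only [if_pos hx, if_pos (hbgy h2), if_pos hab, if_pos h2]; omega
        · simp only [if_pos hx, if_pos hab, if_neg h2]
          by_cases h3 : (b, gy) ∈ Q <;> simp [h3] <;> omega
      · -- x ≠ c : expand u = x :: gy :: rest
        have hEu : expand a b c (x :: y :: r) = x :: gy :: rest := by
          rw [expand_cons, if_neg hx, hE]
        have hgoal : (prs (expand a b c (x :: y :: r))).countP (fun z => decide (z ∈ Q))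
            = (prs (expand a b c (y :: r))).countP (fun z => decide (z ∈ Q))
              + (if (x, gy) ∈ Q then 1 else 0) := by
          rw [hEu, hE, prs_cons₂, List.countP_cons]
          by_cases h1 : (x, gy) ∈ Q <;> simp [h1]
        rw [hcount, hprsu, hgoal]
        have hxgy : (x, y) ∈ Q' → (x, gy) ∈ Q := by
          intro h
          have := hφ (x, y) h
          simpa [hx, hgy] using this
        by_cases h2 : (x, y) ∈ Q'
        · simp only [if_neg hx, if_pos (hxgy h2), if_pos h2]; omega
        · simp only [if_neg hx, if_neg h2]
          by_cases h3 : (x, gy) ∈ Q <;> simp [h3] <;> omega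

lemma reach_le_Fk : ∀ (k : ℕ) (s t : List α), PartialReach k s t →
    s.length ≤ t.length + Fk s k := by
  intro k
  induction k with
  | zero => rintro s t rfl; simp
  | succ k ih =>
    rintro s t ⟨u, ⟨a, b, c, rfl⟩, hr⟩
    have h1 := ih u t hr
    obtain ⟨Q', hQ'k, hQ'⟩ := Fk_attained u k
    set Q : Finset (α × α) :=
      insert (a, b) (Q'.image (fun p => ((if p.1 = c then b else p.1), (if p.2 = c then a else p.2)))) with hQdef
    have hcard : Q.card ≤ k + 1 := by
      calc Q.card ≤ _ + 1 := Finset.card_insert_le _ _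
        _ ≤ k + 1 := by
          have := Finset.card_image_le (s := Q')
            (f := fun p => ((if p.1 = c then b else p.1), (if p.2 = c then a else p.2)))
          omega
    have hstep := step_count a b c Q' Q (Finset.mem_insert_self _ _)
      (fun p hp => Finset.mem_insert_of_mem (Finset.mem_image_of_mem _ hp)) u
    have hsum : (∑ p ∈ Q, freq (expand a b c u) p.1 p.2) ≤ Fk (expand a b c u) (k + 1) :=
      le_Fk _ _ _ hcard
    rw [sum_freq_eq_countP] at hsum
    rw [hQ', sum_freq_eq_countP] at h1
    rw [length_expand]
    omega

lemma OPT_le_Fk (s : List α) (k : ℕ) : OPT s k ≤ Fk s k := by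
  apply csSup_le'
  rintro n ⟨t, hr, rfl⟩
  have := reach_le_Fk k s t hr
  omega
set_option linter.unreachableTactic false
set_option linter.unusedTactic false

lemma partialStep_self [Infinite α] (s : List α) : PartialStep s s := by
  obtain ⟨c, hc⟩ := Infinite.exists_notMem_finset s.toFinset
  exact ⟨c, c, c, expand_of_not_mem c c (by simpa using hc)⟩

lemma reach_succ [Infinite α] {m : ℕ} {s t : List α} (h : PartialReach m s t) :
    PartialReach (m + 1) s t := ⟨s, partialStep_self s, h⟩

lemma reach_mono [Infinite α] {m k : ℕ} (hmk : m ≤ k) {s t : List α}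
    (h : PartialReach m s t) : PartialReach k s t := by
  induction k with
  | zero => simpa [Nat.le_zero.mp hmk] using h
  | succ k ih =>
    rcases Nat.lt_or_ge m (k+1) with hlt | hge
    · exact reach_succ (ih (by omega))
    · have : m = k + 1 := by omega
      subst this; exact h

-- every finite set of naturals has a spread subset of at least half the size
lemma exists_gap_subset (S : Finset ℕ) :
    ∃ T ⊆ S, (∀ a ∈ T, ∀ b ∈ T, a ≠ b → 2 ≤ Nat.dist a b) ∧ S.card ≤ 2 * T.card := by
  induction S using Finset.strongInduction with
  | _ S ih =>
    rcases S.eq_empty_or_nonempty with rfl | hS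
    · exact ⟨∅, by simp⟩
    · set m := S.min' hS with hm
      set S' := (S.erase m).erase (m + 1) with hS'
      have hmS : m ∈ S := S.min'_mem hS
      have hmS' : m ∉ S' := by simp [hS']
      have hsub : S' ⊂ S := by
        refine Finset.ssubset_iff_of_subset ?_ |>.mpr ⟨m, hmS, hmS'⟩
        intro x hx
        exact Finset.mem_of_mem_erase (Finset.mem_of_mem_erase hx)
      obtain ⟨T', hT'S', hgap, hcard⟩ := ih S' hsub
      have hmT' : m ∉ T' := fun h => hmS' (hT'S' h)
      have hge : ∀ x ∈ T', m + 2 ≤ x := by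
        intro x hx
        have hx' : x ∈ S' := hT'S' hx
        have hx1 : x ≠ m := by rintro rfl; exact hmS' hx'
        have hx2 : x ≠ m + 1 := by
          rintro rfl; simp [hS'] at hx'
        have : m ≤ x := S.min'_le x (Finset.mem_of_mem_erase (Finset.mem_of_mem_erase hx'))
        omega
      refine ⟨insert m T', ?_, ?_, ?_⟩
      · intro x hx
        rcases Finset.mem_insert.mp hx with rfl | hx
        · exact hmS
        · exact Finset.mem_of_mem_erase (Finset.mem_of_mem_erase (hT'S' hx))
      · intro x hx y hy hxy
        rcases Finset.mem_insert.mp hx with rfl | hx <;>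
          rcases Finset.mem_insert.mp hy with rfl | hy
        · omega
        · have := hge y hy; simp [Nat.dist]; omega
        · have := hge x hx; simp [Nat.dist]; omega
        · exact hgap x hx y hy hxy
      · have hScard : S.card ≤ S'.card + 2 := by
          have hsub2 : S ⊆ insert m (insert (m + 1) S') := by
            intro x hx
            by_cases h1 : x = m
            · simp [h1]
            · by_cases h2 : x = m + 1
              · simp [h2]
              · simp [hS', Finset.mem_insert, Finset.mem_erase, h1, h2, hx]
          calc S.card ≤ (insert m (insert (m + 1) S')).card := Finset.card_le_card hsub2
            _ ≤ (insert (m + 1) S').card + 1 := Finset.card_insert_le _ _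
            _ ≤ S'.card + 2 := by have := Finset.card_insert_le (m + 1) S'; omega
        have hTcard : (insert m T').card = T'.card + 1 := Finset.card_insert_of_notMem hmT'
        omega
def chunks (T : Finset ℕ) : ℕ → List α → List (List α)
  | _, [] => []
  | _, [x] => [[x]]
  | i, x :: y :: r =>
    if i ∈ T then [x, y] :: chunks T (i + 2) r
    else [x] :: chunks T (i + 1) (y :: r)

lemma chunks_flatten (T : Finset ℕ) : ∀ i (s : List α), (chunks T i s).flatten = s := by
  intro i s
  induction i, s using chunks.induct T with
  | case1 => simp [chunks]
  | case2 => simp [chunks]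
  | case3 i x y r hi ih => simp [chunks, hi, ih]
  | case4 i x y r hi ih => simp [chunks, hi, ih]

lemma chunks_two (T : Finset ℕ) (Q : Finset (α × α)) :
    ∀ i (s : List α), (∀ j ∈ T, i ≤ j → ∃ p ∈ Q, (prs s)[j - i]? = some p) →
    ∀ ch ∈ chunks T i s, ch.length = 2 → ∃ p ∈ Q, ch = [p.1, p.2] := by
  intro i s
  induction i, s using chunks.induct T with
  | case1 i => intro _ ch hch; simp [chunks] at hch
  | case2 i x =>
    intro _ ch hch
    simp [chunks] at hch
    subst hch; simp
  | case3 i x y r hi ih =>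
    intro hT ch hch hlen
    rw [chunks, if_pos hi] at hch
    rcases List.mem_cons.mp hch with rfl | hch
    · obtain ⟨p, hpQ, hp⟩ := hT i hi (le_refl i)
      simp at hp
      exact ⟨p, hpQ, by simp [← hp]⟩
    · refine ih ?_ ch hch hlen
      intro j hj hij
      obtain ⟨p, hpQ, hp⟩ := hT j hj (by omega)
      refine ⟨p, hpQ, ?_⟩
      obtain ⟨d, hd⟩ : ∃ d, j - i = d + 2 := ⟨j - (i + 2), by omega⟩
      rw [hd] at hp
      have hdj : j - (i + 2) = d := by omega
      rw [hdj]
      rw [prs_cons₂, List.getElem?_cons_succ] at hp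
      cases r with
      | nil => simp at hp
      | cons z r' => rwa [prs_cons₂, List.getElem?_cons_succ] at hp
  | case4 i x y r hi ih =>
    intro hT ch hch hlen
    rw [chunks, if_neg hi] at hch
    rcases List.mem_cons.mp hch with rfl | hch
    · simp at hlen
    · refine ih ?_ ch hch hlen
      intro j hj hij
      obtain ⟨p, hpQ, hp⟩ := hT j hj (by omega)
      refine ⟨p, hpQ, ?_⟩
      obtain ⟨d, hd⟩ : ∃ d, j - i = d + 1 := ⟨j - (i + 1), by omega⟩
      rw [hd] at hp
      have hdj : j - (i + 1) = d := by omega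
      rw [hdj]
      rwa [prs_cons₂, List.getElem?_cons_succ] at hp

lemma chunks_count (T : Finset ℕ) (Q : Finset (α × α))
    (hgap : ∀ a ∈ T, ∀ b ∈ T, a ≠ b → 2 ≤ Nat.dist a b) :
    ∀ i (s : List α), (∀ j ∈ T, i ≤ j → ∃ p ∈ Q, (prs s)[j - i]? = some p) →
    (T.filter (fun j => i ≤ j)).card
      ≤ (chunks T i s).countP (fun ch => decide (ch.length = 2)) := by
  intro i s
  induction i, s using chunks.induct T with
  | case1 i =>
    intro hT
    have : T.filter (fun j => i ≤ j) = ∅ := by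
      apply Finset.filter_eq_empty_iff.mpr
      intro j hj hij
      obtain ⟨p, -, hp⟩ := hT j hj hij
      simp at hp
    simp [chunks, this]
  | case2 i x =>
    intro hT
    have : T.filter (fun j => i ≤ j) = ∅ := by
      apply Finset.filter_eq_empty_iff.mpr
      intro j hj hij
      obtain ⟨p, -, hp⟩ := hT j hj hij
      simp at hp
    simp [chunks, this]
  | case3 i x y r hi ih =>
    intro hT
    have hprop : ∀ j ∈ T, i + 2 ≤ j → ∃ p ∈ Q, (prs r)[j - (i + 2)]? = some p := by
      intro j hj hij
      obtain ⟨p, hpQ, hp⟩ := hT j hj (by omega)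
      refine ⟨p, hpQ, ?_⟩
      obtain ⟨d, hd⟩ : ∃ d, j - i = d + 2 := ⟨j - (i + 2), by omega⟩
      rw [hd] at hp
      have hdj : j - (i + 2) = d := by omega
      rw [hdj]
      rw [prs_cons₂, List.getElem?_cons_succ] at hp
      cases r with
      | nil => simp at hp
      | cons z r' => rwa [prs_cons₂, List.getElem?_cons_succ] at hp
    have h1 := ih hprop
    have hsub : T.filter (fun j => i ≤ j) ⊆ insert i (T.filter (fun j => i + 2 ≤ j)) := by
      intro j hj
      rw [Finset.mem_filter] at hj
      by_cases hji : j = i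
      · simp [hji]
      · have := hgap i hi j hj.1 (fun h => hji h.symm)
        simp [Nat.dist] at this
        apply Finset.mem_insert_of_mem
        rw [Finset.mem_filter]
        exact ⟨hj.1, by omega⟩
    have h2 : (T.filter (fun j => i ≤ j)).card ≤ (T.filter (fun j => i + 2 ≤ j)).card + 1 := by
      calc (T.filter (fun j => i ≤ j)).card
          ≤ (insert i (T.filter (fun j => i + 2 ≤ j))).card := Finset.card_le_card hsub
        _ ≤ _ + 1 := Finset.card_insert_le _ _
    rw [chunks, if_pos hi, List.countP_cons]
    simp only [List.length_cons, List.length_nil]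
    norm_num
    omega
  | case4 i x y r hi ih =>
    intro hT
    have hprop : ∀ j ∈ T, i + 1 ≤ j → ∃ p ∈ Q, (prs (y :: r))[j - (i + 1)]? = some p := by
      intro j hj hij
      obtain ⟨p, hpQ, hp⟩ := hT j hj (by omega)
      refine ⟨p, hpQ, ?_⟩
      obtain ⟨d, hd⟩ : ∃ d, j - i = d + 1 := ⟨j - (i + 1), by omega⟩
      rw [hd] at hp
      have hdj : j - (i + 1) = d := by omega
      rw [hdj]
      rwa [prs_cons₂, List.getElem?_cons_succ] at hp
    have h1 := ih hprop
    have heq : T.filter (fun j => i ≤ j) = T.filter (fun j => i + 1 ≤ j) := by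
      apply Finset.filter_congr
      intro j hj
      constructor
      · intro h
        have : j ≠ i := by rintro rfl; exact hi hj
        omega
      · omega
    rw [chunks, if_neg hi, List.countP_cons]
    simp only [List.length_cons, List.length_nil]
    norm_num
    rw [heq]
    omega
lemma mlen (a b c : α) (cs : List (List α)) :
    ((cs.map (fun ch => if ch = [a, b] then [c] else ch)).flatten).length
      + cs.countP (fun ch => decide (ch = [a, b])) = cs.flatten.length := by
  induction cs with
  | nil => simp
  | cons ch cs ih =>
    simp only [List.map_cons, List.flatten_cons, List.length_append, List.countP_cons]
    by_cases h : ch = [a, b]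
    · simp [h] at *; omega
    · simp [h] at *; omega

lemma mcnt (a b c : α) (cs : List (List α)) :
    ((cs.map (fun ch => if ch = [a, b] then [c] else ch)).countP
        (fun ch => decide (ch.length = 2)))
      + cs.countP (fun ch => decide (ch = [a, b]))
      = cs.countP (fun ch => decide (ch.length = 2)) := by
  induction cs with
  | nil => simp
  | cons ch cs ih =>
    simp only [List.map_cons, List.countP_cons]
    by_cases h : ch = [a, b]
    · simp [h] at *; omega
    · simp only [h, if_neg h, decide_false]
      by_cases h2 : ch.length = 2 <;> simp [h, h2] at * <;> omega

lemma mexp {a b c : α} {cs : List (List α)} (hc : c ∉ cs.flatten) :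
    expand a b c ((cs.map (fun ch => if ch = [a, b] then [c] else ch)).flatten)
      = cs.flatten := by
  induction cs with
  | nil => simp [expand]
  | cons ch cs ih =>
    have hc1 : c ∉ ch := fun h => hc (List.mem_flatten.mpr ⟨ch, List.mem_cons_self, h⟩)
    have hc2 : c ∉ cs.flatten := by
      intro h
      obtain ⟨l, hl, hcl⟩ := List.mem_flatten.mp h
      exact hc (List.mem_flatten.mpr ⟨l, List.mem_cons_of_mem _ hl, hcl⟩)
    simp only [List.map_cons, List.flatten_cons, expand_append, ih hc2]
    congr 1
    by_cases h : ch = [a, b]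
    · simp [h, expand, expand_cons]
    · rw [if_neg h]
      exact expand_of_not_mem a b hc1

lemma merge_chunks [Infinite α] : ∀ (qs : List (α × α)) (cs : List (List α)),
    (∀ ch ∈ cs, ch.length = 2 → ∃ p ∈ qs, ch = [p.1, p.2]) →
    ∃ t : List α, PartialReach qs.length cs.flatten t ∧
      t.length + cs.countP (fun ch => decide (ch.length = 2)) ≤ cs.flatten.length := by
  intro qs
  induction qs with
  | nil =>
    intro cs h2
    refine ⟨cs.flatten, rfl, ?_⟩
    have : cs.countP (fun ch => decide (ch.length = 2)) = 0 := by
      apply List.countP_eq_zero.mpr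
      intro ch hch
      simp only [decide_eq_true_eq]
      intro hlen
      obtain ⟨p, hp, -⟩ := h2 ch hch hlen
      simp at hp
    omega
  | cons p qs ih =>
    intro cs h2
    obtain ⟨a, b⟩ := p
    obtain ⟨c, hc⟩ := Infinite.exists_notMem_finset cs.flatten.toFinset
    have hc' : c ∉ cs.flatten := by simpa using hc
    set cs' := cs.map (fun ch => if ch = [a, b] then [c] else ch) with hcs'
    have h2' : ∀ ch ∈ cs', ch.length = 2 → ∃ p ∈ qs, ch = [p.1, p.2] := by
      intro ch hch hlen
      rw [hcs', List.mem_map] at hch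
      obtain ⟨ch0, hch0, rfl⟩ := hch
      by_cases h : ch0 = [a, b]
      · rw [if_pos h] at hlen; simp at hlen
      · rw [if_neg h] at hlen ⊢
        obtain ⟨q, hq, hqe⟩ := h2 ch0 hch0 hlen
        rcases List.mem_cons.mp hq with rfl | hq
        · exact absurd hqe h
        · exact ⟨q, hq, hqe⟩
    obtain ⟨t, hreach, hlen⟩ := ih cs' h2'
    have hlen1 := mlen a b c cs
    have hcnt1 := mcnt a b c cs
    refine ⟨t, ⟨cs'.flatten, ⟨a, b, c, mexp hc'⟩, hreach⟩, ?_⟩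
    rw [← hcs'] at hlen1 hcnt1
    omega
lemma card_filter_getElem (Q : Finset (α × α)) :
    ∀ l : List (α × α),
    ((Finset.range l.length).filter (fun j => ∃ p ∈ Q, l[j]? = some p)).card
      = l.countP (fun z => decide (z ∈ Q)) := by
  intro l
  induction l with
  | nil => simp
  | cons z l ih =>
    rw [Finset.card_filter, List.length_cons, Finset.sum_range_succ']
    have h0 : (if ∃ p ∈ Q, (z :: l)[0]? = some p then 1 else 0)
        = (if z ∈ Q then 1 else 0) := by
      by_cases h : z ∈ Q
      · rw [if_pos h, if_pos ⟨z, h, by simp⟩]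
      · rw [if_neg h, if_neg]
        rintro ⟨p, hp, hpe⟩
        simp at hpe
        exact h (hpe ▸ hp)
    have hs : (∑ k ∈ Finset.range l.length,
        if ∃ p ∈ Q, (z :: l)[k + 1]? = some p then 1 else 0)
        = l.countP (fun z => decide (z ∈ Q)) := by
      rw [← ih, Finset.card_filter]
      exact Finset.sum_congr rfl (by intro k _; rw [List.getElem?_cons_succ])
    rw [h0, hs, List.countP_cons]
    by_cases h : z ∈ Q <;> simp [h]

/-- EvenOdd is a `0.5`-approximation for OPE: there is a partial
merge sequence of length `k` with utility at least `F_k(s)/2 ≥ OPT(s,k)/2`. -/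
theorem stmt11 {α : Type*} [DecidableEq α] [Infinite α] (s : List α) (k : ℕ) :
    ∃ t : List α, PartialReach k s t ∧
      Fk s k ≤ 2 * (s.length - t.length) ∧ OPT s k ≤ Fk s k := by
  classical
  obtain ⟨Q, hQk, hQF⟩ := Fk_attained s k
  set O : Finset ℕ :=
    (Finset.range (prs s).length).filter (fun j => ∃ p ∈ Q, (prs s)[j]? = some p) with hO
  have hOcard : O.card = (prs s).countP (fun z => decide (z ∈ Q)) :=
    card_filter_getElem Q (prs s)
  obtain ⟨T, hTO, hgap, hcard⟩ := exists_gap_subset O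
  have hT0 : ∀ j ∈ T, 0 ≤ j → ∃ p ∈ Q, (prs s)[j - 0]? = some p := by
    intro j hj _
    have := hTO hj
    rw [hO, Finset.mem_filter] at this
    simpa using this.2
  have hflat : (chunks T 0 s).flatten = s := chunks_flatten T 0 s
  have h2 : ∀ ch ∈ chunks T 0 s, ch.length = 2 → ∃ p ∈ Q.toList, ch = [p.1, p.2] := by
    intro ch hch hlen
    obtain ⟨p, hp, hpe⟩ := chunks_two T Q 0 s hT0 ch hch hlen
    exact ⟨p, Finset.mem_toList.mpr hp, hpe⟩
  have hcnt : T.card ≤ (chunks T 0 s).countP (fun ch => decide (ch.length = 2)) := by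
    have h := chunks_count T Q hgap 0 s hT0
    have hfT : T.filter (fun j => 0 ≤ j) = T :=
      Finset.filter_true_of_mem (fun _ _ => Nat.zero_le _)
    rwa [hfT] at h
  obtain ⟨t, hreach, hlen⟩ := merge_chunks Q.toList (chunks T 0 s) h2
  rw [hflat] at hreach hlen
  have hreach' : PartialReach k s t :=
    reach_mono (by rw [Finset.length_toList]; exact hQk) hreach
  refine ⟨t, hreach', ?_, OPT_le_Fk s k⟩
  rw [hQF, sum_freq_eq_countP]
  omega
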